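/- arXiv:2405.13690 — 5 statements merged into one kernel-verified Lean document; each statement's English description precedes it below -/
import Mathlib

section
/- For the convex function g(x) = e^x·y − z·x with y > 0 and z ∈ ℝ, the proximal operator satisfies prox_g(x, τ) = x + τz − W₀(τ·y·e^{x+τz}), where W₀ is the principal branch of the Lambert W function (the unique solution of w·e^w = t for t > 0). -/
/-- Proximal operator of g(u) = e^u·y − z·u is u ↦ x + τz − W₀(τ y e^{x+τz}),
where W₀ is characterized by w·e^w = t (unique for t > 0 among w ≥ 0). -/
theorem prox_of_exp_linear (y zc τ x p w : ℝ) (hy : 0 < y) (hτ : 0 < τ)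
    (hp : IsMinOn (fun u : ℝ => (u - x) ^ 2 / (2 * τ) + (Real.exp u * y - zc * u))
      Set.univ p)
    (hw0 : 0 ≤ w)
    (hw : w * Real.exp w = τ * y * Real.exp (x + τ * zc)) :
    p = x + τ * zc - w := by
  have hτ' : τ ≠ 0 := ne_of_gt hτ
  set q : ℝ := x + τ * zc - w with hq
  set h : ℝ → ℝ := fun u => (u - x) / τ + Real.exp u * y - zc with hh
  have hmono : StrictMono h := by
    intro a b hab
    have h1 : Real.exp a < Real.exp b := Real.exp_lt_exp.2 hab
    have h2 : (a - x) / τ < (b - x) / τ := by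
      apply div_lt_div_of_pos_right _ hτ
      linarith
    simp only [hh]
    nlinarith
  -- h p = 0 from minimality
  have hloc : IsLocalMin (fun u : ℝ => (u - x) ^ 2 / (2 * τ) + (Real.exp u * y - zc * u)) p :=
    (hp.isLocalMin (by simp))
  have hderiv : HasDerivAt (fun u : ℝ => (u - x) ^ 2 / (2 * τ) + (Real.exp u * y - zc * u))
      (h p) p := by
    have d1 : HasDerivAt (fun u : ℝ => (u - x) ^ 2 / (2 * τ))
        ((2 * (p - x) ^ 1 * 1) / (2 * τ)) p :=
      (((hasDerivAt_id p).sub_const x).pow 2).div_const (2 * τ)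
    have d2 : HasDerivAt (fun u : ℝ => Real.exp u * y) (Real.exp p * y) p :=
      (Real.hasDerivAt_exp p).mul_const y
    have d3 : HasDerivAt (fun u : ℝ => zc * u) (zc * 1) p :=
      (hasDerivAt_id p).const_mul zc
    have := d1.add (d2.sub d3)
    refine this.congr_deriv ?_
    show _ = (p - x) / τ + Real.exp p * y - zc
    field_simp
    ring
  have hp0 : h p = 0 := hloc.hasDerivAt_eq_zero hderiv
  have hq0 : h q = 0 := by
    have he : Real.exp q = Real.exp (x + τ * zc) * Real.exp (-w) := by
      rw [hq, ← Real.exp_add]; ring_nf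
    have hyq : Real.exp q * y = w / τ := by
      rw [he]
      have : y * Real.exp (x + τ * zc) = w * Real.exp w / τ := by
        field_simp at hw ⊢
        linarith [hw, (by ring : w * Real.exp w * τ = w * (τ * Real.exp w))]
      calc Real.exp (x + τ * zc) * Real.exp (-w) * y
          = (y * Real.exp (x + τ * zc)) * Real.exp (-w) := by ring
        _ = (w * Real.exp w / τ) * Real.exp (-w) := by rw [this]
        _ = w / τ := by
            rw [Real.exp_neg]
            field_simp
    simp only [hh]
    rw [hyq, hq]
    field_simp
    ring
  exact hmono.injective (hp0.trans hq0.symm)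
end

section
/- For a convex differentiable function f: ℝ → ℝ and α > 0, the derivative of the Moreau envelope satisfies M'_f(x, α) = (x − prox_f(x, α))/α = f'(prox_f(x, α)). -/
/-- Derivative of the Moreau envelope: M'_f(x,α) = (x − prox_f(x,α))/α = f'(prox_f(x,α)). -/
theorem moreau_deriv (f : ℝ → ℝ) (α : ℝ) (hα : 0 < α)
    (hconv : ConvexOn ℝ Set.univ f) (hdiff : Differentiable ℝ f)
    (hcont : Continuous (deriv f))
    (prox M : ℝ → ℝ)
    (hprox : ∀ x, IsMinOn (fun z : ℝ => (z - x) ^ 2 / (2 * α) + f z) Set.univ (prox x))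
    (hM : ∀ x, M x = (prox x - x) ^ 2 / (2 * α) + f (prox x))
    (x : ℝ) :
    HasDerivAt M ((x - prox x) / α) x ∧ (x - prox x) / α = deriv f (prox x) := by
  -- First-order optimality condition at prox y, for every y
  have key : ∀ y, deriv f (prox y) = (y - prox y) / α := by
    intro y
    have hD : HasDerivAt (fun z : ℝ => (z - y) ^ 2 / (2 * α) + f z)
        ((prox y - y) / α + deriv f (prox y)) (prox y) := by
      have h1 : HasDerivAt (fun z : ℝ => (z - y) ^ 2 / (2 * α))
          (2 * (prox y - y) ^ 1 * 1 / (2 * α)) (prox y) :=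
        (((hasDerivAt_id (prox y)).sub_const y).pow 2).div_const (2 * α)
      have h2 := (hdiff (prox y)).hasDerivAt
      have := (h1.add h2 : HasDerivAt (fun z : ℝ => (z - y) ^ 2 / (2 * α) + f z) _ (prox y))
      exact this.congr_deriv (by ring)
    have hloc : IsLocalMin (fun z : ℝ => (z - y) ^ 2 / (2 * α) + f z) (prox y) :=
      (hprox y).isLocalMin Filter.univ_mem
    have h0 := hloc.hasDerivAt_eq_zero hD
    have hα' : α ≠ 0 := ne_of_gt hα
    field_simp at h0 ⊢
    linarith
  -- Nonexpansiveness of prox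
  have mono : MonotoneOn (deriv f) Set.univ :=
    hconv.monotoneOn_deriv (fun z _ => hdiff z)
  have hnonexp : ∀ y, |prox y - prox x| ≤ |y - x| := by
    intro y
    have hmono : 0 ≤ (deriv f (prox y) - deriv f (prox x)) * (prox y - prox x) := by
      rcases le_total (prox x) (prox y) with h | h
      · have := mono (Set.mem_univ (prox x)) (Set.mem_univ (prox y)) h
        nlinarith
      · have := mono (Set.mem_univ (prox y)) (Set.mem_univ (prox x)) h
        nlinarith
    rw [key x, key y] at hmono
    have hsq : (prox y - prox x) ^ 2 ≤ (y - x) * (prox y - prox x) := by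
      rw [div_sub_div_same, div_mul_eq_mul_div, le_div_iff₀ hα] at hmono
      nlinarith [hmono]
    have h1 : (y - x) * (prox y - prox x) ≤ |y - x| * |prox y - prox x| := by
      calc (y - x) * (prox y - prox x) ≤ |(y - x) * (prox y - prox x)| := le_abs_self _
        _ = |y - x| * |prox y - prox x| := abs_mul _ _
    nlinarith [abs_nonneg (prox y - prox x), abs_nonneg (y - x), sq_abs (prox y - prox x)]
  -- Two-sided bound on M y - M x
  have hub : ∀ y, M y - M x ≤ (y - x) * (x - prox x) / α + (y - x) ^ 2 / (2 * α) := by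
    intro y
    have h := (hprox y) (Set.mem_univ (prox x))
    simp only at h
    rw [hM y, hM x]
    have hα' : α ≠ 0 := ne_of_gt hα
    have : (prox y - y) ^ 2 / (2 * α) + f (prox y) ≤ (prox x - y) ^ 2 / (2 * α) + f (prox x) := h
    have e : (prox x - y) ^ 2 / (2 * α) - (prox x - x) ^ 2 / (2 * α)
        = (y - x) * (x - prox x) / α + (y - x) ^ 2 / (2 * α) := by
      field_simp
      ring
    linarith
  have hlb : ∀ y, (y - x) * (x - prox y) / α + (y - x) ^ 2 / (2 * α) ≤ M y - M x := by
    intro y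
    have h := (hprox x) (Set.mem_univ (prox y))
    simp only at h
    rw [hM y, hM x]
    have hα' : α ≠ 0 := ne_of_gt hα
    have : (prox x - x) ^ 2 / (2 * α) + f (prox x) ≤ (prox y - x) ^ 2 / (2 * α) + f (prox y) := h
    have e : (prox y - y) ^ 2 / (2 * α) - (prox y - x) ^ 2 / (2 * α)
        = (y - x) * (x - prox y) / α + (y - x) ^ 2 / (2 * α) := by
      field_simp
      ring
    linarith
  constructor
  · rw [hasDerivAt_iff_isLittleO]
    rw [Asymptotics.isLittleO_iff]
    intro c hc
    have hδ : 0 < c * α / 3 := by positivity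
    rw [Metric.eventually_nhds_iff]
    refine ⟨c * α / 3, hδ, fun y hy => ?_⟩
    rw [Real.dist_eq] at hy
    have hbound : |M y - M x - (y - x) * ((x - prox x) / α)| ≤ 3 / (2 * α) * (y - x) ^ 2 := by
      have h1 := hub y
      have h2 := hlb y
      have h3 := hnonexp y
      set K := (y - x) ^ 2 / (2 * α) with hK
      have hKnn : 0 ≤ K := by positivity
      have e2 : 3 / (2 * α) * (y - x) ^ 2 = 3 * K := by rw [hK]; ring
      rw [abs_le, e2]
      have hd : (y - x) * (x - prox y) / α - (y - x) * (x - prox x) / α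
          = (y - x) * (prox x - prox y) / α := by ring
      have habs : |(y - x) * (prox x - prox y)| ≤ (y - x) ^ 2 := by
        rw [abs_mul]
        calc |y - x| * |prox x - prox y| ≤ |y - x| * |y - x| := by
              rw [abs_sub_comm (prox x)]
              exact mul_le_mul_of_nonneg_left h3 (abs_nonneg _)
          _ = (y - x) ^ 2 := by rw [← sq_abs]; ring
      have h4 : -((y - x) ^ 2) ≤ (y - x) * (prox x - prox y) := neg_le_of_abs_le habs
      have h5 : -((y - x) ^ 2) / α ≤ (y - x) * (prox x - prox y) / α :=
        div_le_div_of_nonneg_right h4 hα.le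
      have e3 : -((y - x) ^ 2) / α = -(2 * K) := by rw [hK]; field_simp
      rw [e3] at h5
      have e4 : (y - x) * ((x - prox x) / α) = (y - x) * (x - prox x) / α := by ring
      rw [e4]
      constructor
      · linarith [h2, h5, hd.le, hd.ge]
      · linarith [h1]
    have h6 : 3 / (2 * α) * (y - x) ^ 2 ≤ c * |y - x| := by
      have : (y - x) ^ 2 = |y - x| * |y - x| := by rw [← sq_abs]; ring
      rw [this]
      calc 3 / (2 * α) * (|y - x| * |y - x|) ≤ 3 / (2 * α) * (c * α / 3 * |y - x|) := by
            apply mul_le_mul_of_nonneg_left _ (by positivity)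
            exact mul_le_mul_of_nonneg_right hy.le (abs_nonneg _)
        _ ≤ c * |y - x| := by
            rw [div_mul_eq_mul_div, div_le_iff₀ (by positivity)]
            ring_nf
            nlinarith [abs_nonneg (y - x), hc.le, hα.le]
    calc ‖M y - M x - (y - x) • ((x - prox x) / α)‖
        = |M y - M x - (y - x) * ((x - prox x) / α)| := by norm_num
      _ ≤ 3 / (2 * α) * (y - x) ^ 2 := hbound
      _ ≤ c * |y - x| := h6
      _ = c * ‖y - x‖ := by norm_num
  · rw [key x]
end

section
/- For a convex twice continuously differentiable function f and α > 0, the second derivative of the Moreau envelope satisfies M''_f(x, α) = f''(p)/(1 + α·f''(p)), where p = prox_f(x, α). -/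
/-- Second derivative of the Moreau envelope: M''_f(x,α) = f''(p)/(1+α f''(p)), p = prox_f(x,α). -/
theorem moreau_second_deriv (f : ℝ → ℝ) (α : ℝ) (hα : 0 < α)
    (hconv : ConvexOn ℝ Set.univ f) (hf : ContDiff ℝ 2 f)
    (prox M : ℝ → ℝ)
    (hprox : ∀ x, IsMinOn (fun z : ℝ => (z - x) ^ 2 / (2 * α) + f z) Set.univ (prox x))
    (hM : ∀ x, M x = (prox x - x) ^ 2 / (2 * α) + f (prox x))
    (x : ℝ) :
    HasDerivAt (deriv M)
      (deriv (deriv f) (prox x) / (1 + α * deriv (deriv f) (prox x))) x := by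
  -- differentiability facts
  have hf2 : ContDiff ℝ ((1 : ℕ) + 1) f := by exact_mod_cast hf
  rw [contDiff_succ_iff_deriv] at hf2
  have hfd : Differentiable ℝ f := hf2.1
  have hf'd : Differentiable ℝ (deriv f) := hf2.2.2.differentiable (by norm_num)
  -- f'' ≥ 0
  have hmono : Monotone (deriv f) := by
    have := hconv.monotoneOn_deriv (fun z _ => hfd z)
    exact monotone_iff_forall_lt.mpr fun a b hab =>
      this (Set.mem_univ a) (Set.mem_univ b) hab.le
  have hf''nonneg : ∀ z, 0 ≤ deriv (deriv f) z := by
    intro z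
    have hd := (hf'd z).hasDerivAt
    rw [hasDerivAt_iff_tendsto_slope] at hd
    have hd2 : Filter.Tendsto (slope (deriv f) z) (nhdsWithin z (Set.Ioi z))
        (nhds (deriv (deriv f) z)) :=
      hd.mono_left (nhdsWithin_mono z (fun y hy => ne_of_gt hy))
    refine ge_of_tendsto hd2 ?_
    filter_upwards [self_mem_nhdsWithin] with y hy
    have : (0:ℝ) < y - z := by simp at hy; linarith
    have h2 : deriv f z ≤ deriv f y := hmono (le_of_lt (by simpa using hy))
    rw [slope_def_field]
    exact div_nonneg (by linarith) this.le
  -- the map g z = z + α f' z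
  set g : ℝ → ℝ := fun z => z + α * deriv f z with hg
  have hgderiv : ∀ z, HasDerivAt g (1 + α * deriv (deriv f) z) z := fun z =>
    (hasDerivAt_id z).add (((hf'd z).hasDerivAt).const_mul α)
  have hgpos : ∀ z, 0 < 1 + α * deriv (deriv f) z := fun z => by
    have := mul_nonneg hα.le (hf''nonneg z); linarith
  have hgmono : StrictMono g :=
    strictMono_of_deriv_pos fun z => by
      rw [(hgderiv z).deriv]; exact hgpos z
  -- first order condition : g (prox x) = x
  have hfo : ∀ y, g (prox y) = y := by
    intro y
    have hd : ∀ z, HasDerivAt (fun z : ℝ => (z - y) ^ 2 / (2 * α) + f z)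
        ((z - y) / α + deriv f z) z := by
      intro z
      have h1 : HasDerivAt (fun z : ℝ => (z - y) ^ 2 / (2 * α)) ((z - y) / α) z := by
        have : HasDerivAt (fun z : ℝ => (z - y) ^ 2) (2 * (z - y)) z := by
          simpa using (((hasDerivAt_id z).sub_const y).fun_pow 2)
        have := this.div_const (2 * α)
        convert this using 1; rfl; rfl; field_simp
      exact h1.add (hfd z).hasDerivAt
    have hmin := (hprox y).isLocalMin (by simp [Filter.univ_mem])
    have := hmin.deriv_eq_zero
    rw [(hd (prox y)).deriv] at this
    have hαne : α ≠ 0 := hα.ne'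
    simp only [hg]
    field_simp at this ⊢
    linarith
  -- prox is the inverse of g
  have hsurj : Function.Surjective g := fun y => ⟨prox y, hfo y⟩
  have hproxcont : Continuous prox := by
    let e : ℝ ≃o ℝ := (StrictMono.orderIsoOfSurjective g hgmono hsurj)
    have hpe : prox = e.symm := by
      funext y
      have : e (prox y) = e (e.symm y) := by
        simp only [OrderIso.apply_symm_apply]
        exact hfo y
      exact e.injective this
    rw [hpe]; exact e.symm.continuous
  -- derivative of prox
  have hproxderiv : ∀ y, HasDerivAt prox (1 + α * deriv (deriv f) (prox y))⁻¹ y := by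
    intro y
    exact HasDerivAt.of_local_left_inverse hproxcont.continuousAt
      (hgderiv (prox y)) (hgpos (prox y)).ne'
      (Filter.Eventually.of_forall hfo)
  -- derivative of M
  have hMderiv : ∀ y, HasDerivAt M ((y - prox y) / α) y := by
    intro y
    have hMfun : M = fun y => (prox y - y) ^ 2 / (2 * α) + f (prox y) := funext hM
    rw [hMfun]
    set p' := (1 + α * deriv (deriv f) (prox y))⁻¹
    have h1 : HasDerivAt (fun y => (prox y - y) ^ 2 / (2 * α))
        (2 * (prox y - y) * (p' - 1) / (2 * α)) y := by
      have : HasDerivAt (fun y => (prox y - y) ^ 2) (2 * (prox y - y) * (p' - 1)) y := by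
        have := ((hproxderiv y).sub (hasDerivAt_id y)).fun_pow 2
        simpa [mul_comm] using this
      exact this.div_const _
    have h2 : HasDerivAt (fun y => f (prox y)) (deriv f (prox y) * p') y :=
      (hfd (prox y)).hasDerivAt.comp y (hproxderiv y)
    have h3 := h1.add h2
    convert h3 using 1; rfl; rfl; rfl
    have hf' : deriv f (prox y) = (y - prox y) / α := by
      have := hfo y; simp only [hg] at this
      field_simp; linarith
    rw [hf']
    field_simp
    ring
  have hMd : deriv M = fun y => (y - prox y) / α := funext fun y => (hMderiv y).deriv
  rw [hMd]
  have : HasDerivAt (fun y => (y - prox y) / α)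
      ((1 - (1 + α * deriv (deriv f) (prox x))⁻¹) / α) x :=
    ((hasDerivAt_id x).sub (hproxderiv x)).div_const α
  convert this using 1
  have h := hgpos (prox x)
  field_simp
  rw [eq_sub_iff_add_eq, ← add_div, div_eq_one_iff_eq (by linarith)]
  ring
end

section
/- For Z ~ N(0,1), σ > 0 and μ, α ∈ ℝ: E[Z·relu(σZ + μ − α)] = σ·Φ̄((α−μ)/σ), where relu(t) = max(t, 0). -/
open MeasureTheory ProbabilityTheory

noncomputable def gaussPDF (t : ℝ) : ℝ := Real.exp (-t ^ 2 / 2) / Real.sqrt (2 * Real.pi)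

noncomputable def PhiBar (x : ℝ) : ℝ := ∫ t in Set.Ici x, gaussPDF t

noncomputable def relu (t : ℝ) : ℝ := max t 0

lemma gaussPDF_eq : gaussPDF = gaussianPDFReal 0 1 := by
  funext x
  simp [gaussPDF, gaussianPDFReal, Real.exp_neg, div_eq_mul_inv, mul_comm, neg_div]

lemma hasDerivAt_gaussPDF (z : ℝ) :
    HasDerivAt gaussPDF (-z * gaussPDF z) z := by
  have h1 : HasDerivAt (fun t : ℝ => -t ^ 2 / 2) (-z) z := by
    have := ((hasDerivAt_pow 2 z).neg).div_const 2
    exact this.congr_deriv (by ring)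
  have h2 := (h1.exp).div_const (Real.sqrt (2 * Real.pi))
  exact h2.congr_deriv (by unfold gaussPDF; ring)

lemma integrable_gaussPDF : Integrable gaussPDF := by
  rw [gaussPDF_eq]; exact integrable_gaussianPDFReal 0 1

lemma integrable_mul_gaussPDF : Integrable (fun z : ℝ => z * gaussPDF z) := by
  have := (integrable_mul_exp_neg_mul_sq (b := 1/2) (by norm_num)).div_const
    (Real.sqrt (2 * Real.pi))
  convert this using 2 with z
  unfold gaussPDF
  ring_nf

lemma integrable_sq_mul_gaussPDF : Integrable (fun z : ℝ => z ^ 2 * gaussPDF z) := by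
  have h := (integrable_rpow_mul_exp_neg_mul_sq (b := 1/2) (by norm_num)
    (s := (2 : ℝ)) (by norm_num)).div_const (Real.sqrt (2 * Real.pi))
  convert h using 2 with z
  rw [show ((2:ℝ)) = ((2:ℕ):ℝ) by norm_num, Real.rpow_natCast]
  unfold gaussPDF
  ring_nf

/-- E[Z·relu(σZ + μ − α)] = σ·Φ̄((α−μ)/σ) for Z ~ N(0,1). -/
theorem gauss_z_relu_mean (σ μ α : ℝ) (hσ : 0 < σ) :
    (∫ z, z * relu (σ * z + μ - α) ∂(gaussianReal 0 1)) = σ * PhiBar ((α - μ) / σ) := by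
  set c : ℝ := (α - μ) / σ with hc
  -- Step 1: rewrite the integral with the density
  have hdens : (∫ z, z * relu (σ * z + μ - α) ∂(gaussianReal 0 1))
      = ∫ z, gaussPDF z * (z * relu (σ * z + μ - α)) := by
    rw [gaussianReal_of_var_ne_zero 0 one_ne_zero]
    have hm : Measurable fun x => Real.toNNReal (gaussianPDFReal 0 1 x) :=
      (measurable_gaussianPDFReal 0 1).real_toNNReal
    have : (gaussianPDF 0 1) = fun x => ((Real.toNNReal (gaussianPDFReal 0 1 x) : NNReal) : ENNReal) :=
      rfl
    rw [this, integral_withDensity_eq_integral_smul hm]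
    congr 1
    funext x
    rw [NNReal.smul_def, Real.coe_toNNReal _ (gaussianPDFReal_nonneg 0 1 x), gaussPDF_eq, smul_eq_mul]
  rw [hdens]
  -- Step 2: pointwise reduction to an indicator
  have hpt : ∀ z : ℝ, gaussPDF z * (z * relu (σ * z + μ - α))
      = σ * Set.indicator (Set.Ici c) (fun z => z * (z - c) * gaussPDF z) z := by
    intro z
    have hσμα : σ * z + μ - α = σ * (z - c) := by
      rw [hc, mul_sub, mul_div_assoc', mul_div_cancel_left₀ _ hσ.ne']
      ring
    by_cases hz : z ∈ Set.Ici c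
    · have h1 : (0:ℝ) ≤ z - c := by simpa using sub_nonneg.mpr (Set.mem_Ici.mp hz)
      rw [Set.indicator_of_mem hz]
      unfold relu
      rw [hσμα, max_eq_left (mul_nonneg hσ.le h1)]
      ring
    · have h1 : z - c < 0 := by simp at hz; linarith
      rw [Set.indicator_of_notMem hz]
      unfold relu
      rw [hσμα, max_eq_right (by nlinarith)]
      ring
  simp_rw [hpt]
  rw [integral_const_mul, integral_indicator measurableSet_Ici]
  congr 1
  -- Step 3: ∫ z in Ici c, z * (z - c) * gaussPDF z = PhiBar c
  rw [MeasureTheory.integral_Ici_eq_integral_Ioi]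
  have hint2 : Integrable (fun z : ℝ => z * (z - c) * gaussPDF z) := by
    have := integrable_sq_mul_gaussPDF.sub (integrable_mul_gaussPDF.const_mul c)
    convert this using 1
    funext z
    simp only [Pi.sub_apply]
    ring
  have hintg := integrable_gaussPDF
  have hF : ∀ z ∈ Set.Ici c, HasDerivAt (fun z => -((z - c) * gaussPDF z))
      (z * (z - c) * gaussPDF z - gaussPDF z) z := by
    intro z _
    have h := (((hasDerivAt_id z).sub_const c).mul (hasDerivAt_gaussPDF z)).neg
    simp only [id_eq] at h
    exact h.congr_deriv (by ring)
  have htend : Filter.Tendsto (fun z => -((z - c) * gaussPDF z)) Filter.atTop (nhds 0) := by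
    have h0 : Filter.Tendsto (fun z : ℝ => (z - c) * gaussPDF z) Filter.atTop (nhds 0) := by
      have hlo := rpow_mul_exp_neg_mul_sq_isLittleO_exp_neg (b := 1/2) (by norm_num) 1
      have hlo0 := exp_neg_mul_sq_isLittleO_exp_neg (b := 1/2) (by norm_num)
      have hexp0 : Filter.Tendsto (fun x : ℝ => Real.exp (-x)) Filter.atTop (nhds 0) :=
        Real.tendsto_exp_neg_atTop_nhds_zero
      have hexp : Filter.Tendsto (fun x : ℝ => Real.exp (-(1/2) * x)) Filter.atTop (nhds 0) :=
        Real.tendsto_exp_atBot.comp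
          ((Filter.tendsto_const_mul_atBot_of_neg (by norm_num)).mpr Filter.tendsto_id)
      have h1 : Filter.Tendsto (fun z : ℝ => z * Real.exp (-(1/2) * z ^ 2))
          Filter.atTop (nhds 0) := by
        have := hlo.tendsto_zero_of_tendsto hexp
        refine this.congr' ?_
        filter_upwards [Filter.eventually_ge_atTop (0:ℝ)] with z hz
        rw [Real.rpow_one]
      have h2 : Filter.Tendsto (fun z : ℝ => Real.exp (-(1/2) * z ^ 2))
          Filter.atTop (nhds 0) := hlo0.tendsto_zero_of_tendsto hexp0
      have := ((h1.sub (h2.const_mul c)).div_const (Real.sqrt (2 * Real.pi)))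
      simp only [zero_sub, mul_zero, sub_zero, zero_div] at this
      convert this using 2 with z
      unfold gaussPDF
      field_simp
    simpa using h0.neg
  have key := integral_Ioi_of_hasDerivAt_of_tendsto' hF
    ((hint2.sub hintg).integrableOn) htend
  have split : (∫ z in Set.Ioi c, (z * (z - c) * gaussPDF z - gaussPDF z))
      = (∫ z in Set.Ioi c, z * (z - c) * gaussPDF z) - ∫ z in Set.Ioi c, gaussPDF z :=
    integral_sub hint2.integrableOn hintg.integrableOn
  rw [split] at key
  simp only [sub_self, mul_zero, zero_mul, zero_sub, neg_neg, mul_zero] at key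
  have : (∫ z in Set.Ioi c, z * (z - c) * gaussPDF z) = ∫ z in Set.Ioi c, gaussPDF z := by
    linarith
  rw [this, PhiBar, MeasureTheory.integral_Ici_eq_integral_Ioi]
end

section
/- Laplace principle for the Moreau envelope: for a convex continuous function b: ℝ → ℝ with b(z) ≥ c₁|z| − c₂ for some c₁ > 0 (coercivity), and α > 0, one has lim_{γ→∞} −(1/γ)·log ∫_ℝ exp(−γ[(z−x)²/(2α) + b(z)]) dz = M_b(x, α) = min_z { (z−x)²/(2α) + b(z) }. -/
open Filter MeasureTheory

/-- Laplace principle for the Moreau envelope. -/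
theorem laplace_moreau (b : ℝ → ℝ) (x α c₁ c₂ : ℝ) (hα : 0 < α) (hc₁ : 0 < c₁)
    (hconv : ConvexOn ℝ Set.univ b) (hcont : Continuous b)
    (hgrow : ∀ z, c₁ * |z| - c₂ ≤ b z)
    (p : ℝ)
    (hp : IsMinOn (fun z : ℝ => (z - x) ^ 2 / (2 * α) + b z) Set.univ p) :
    Tendsto
      (fun γ : ℝ =>
        -(1 / γ) * Real.log (∫ z : ℝ, Real.exp (-γ * ((z - x) ^ 2 / (2 * α) + b z))))
      atTop (nhds ((p - x) ^ 2 / (2 * α) + b p)) := by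
  set f : ℝ → ℝ := fun z => (z - x) ^ 2 / (2 * α) + b z with hf
  set m : ℝ := f p with hm
  have hfc : Continuous f := by
    apply Continuous.add _ hcont
    continuity
  have hfm : ∀ z, m ≤ f z := fun z => hp (Set.mem_univ z)
  -- lower bound on f via growth
  have hflb : ∀ z, (z - x) ^ 2 / (2 * α) - c₂ ≤ f z := by
    intro z
    have h1 : c₁ * |z| - c₂ ≤ b z := hgrow z
    have h2 : 0 ≤ c₁ * |z| := mul_nonneg hc₁.le (abs_nonneg z)
    simp only [hf]; linarith
  -- integrability of exp(-γ f) for γ > 0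
  have hint : ∀ γ : ℝ, 0 < γ → Integrable (fun z => Real.exp (-γ * f z)) := by
    intro γ hγ
    have hpos : 0 < γ / (2 * α) := div_pos hγ (by linarith)
    have hg : Integrable (fun z : ℝ => Real.exp (γ * c₂) *
        Real.exp (-(γ / (2 * α)) * (z - x) ^ 2)) := by
      exact ((integrable_exp_neg_mul_sq hpos).comp_sub_right x).const_mul _
    refine hg.mono ?_ ?_
    · exact (Continuous.aestronglyMeasurable (by continuity))
    · refine Filter.Eventually.of_forall fun z => ?_
      rw [Real.norm_eq_abs, Real.norm_eq_abs, abs_of_nonneg (Real.exp_pos _).le,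
        abs_of_nonneg (mul_nonneg (Real.exp_pos _).le (Real.exp_pos _).le),
        ← Real.exp_add]
      apply Real.exp_le_exp.2
      have := hflb z
      have h3 : -γ * f z ≤ -γ * ((z - x) ^ 2 / (2 * α) - c₂) :=
        mul_le_mul_of_nonpos_left this (by linarith)
      calc -γ * f z ≤ -γ * ((z - x) ^ 2 / (2 * α) - c₂) := h3
        _ = γ * c₂ + -(γ / (2 * α)) * (z - x) ^ 2 := by field_simp; ring
  -- positivity of the integral
  have hIpos : ∀ γ : ℝ, 0 < γ → 0 < ∫ z : ℝ, Real.exp (-γ * f z) := by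
    intro γ hγ
    rw [integral_pos_iff_support_of_nonneg (fun z => (Real.exp_pos _).le) (hint γ hγ)]
    have : Function.support (fun z : ℝ => Real.exp (-γ * f z)) = Set.univ := by
      ext z; simp [Function.mem_support, (Real.exp_pos _).ne']
    rw [this]
    simp
  set C : ℝ := ∫ z : ℝ, Real.exp (-1 * f z) with hC
  have hCpos : 0 < C := hIpos 1 one_pos
  rw [tendsto_order]
  constructor
  · -- lower bound: a' < m, eventually a' < -(1/γ) log ∫
    intro a ha
    have hlim : Tendsto (fun γ : ℝ => m - (m + Real.log C) / γ) atTop (nhds m) := by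
      have : Tendsto (fun γ : ℝ => (m + Real.log C) / γ) atTop (nhds 0) :=
        tendsto_const_nhds.div_atTop tendsto_id
      simpa using tendsto_const_nhds.sub this
    have hev : ∀ᶠ γ : ℝ in atTop, a < m - (m + Real.log C) / γ :=
      hlim.eventually (eventually_gt_nhds ha)
    filter_upwards [hev, eventually_ge_atTop (1 : ℝ)] with γ hγa hγ1
    have hγ0 : (0 : ℝ) < γ := lt_of_lt_of_le one_pos hγ1
    -- ∫ exp(-γ f) ≤ exp(-(γ-1) m) * C
    have hbound : (∫ z : ℝ, Real.exp (-γ * f z)) ≤ Real.exp (-(γ - 1) * m) * C := by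
      have h1 : ∀ z, Real.exp (-γ * f z) ≤ Real.exp (-(γ - 1) * m) * Real.exp (-1 * f z) := by
        intro z
        rw [← Real.exp_add]
        apply Real.exp_le_exp.2
        have := hfm z
        nlinarith [hfm z]
      calc (∫ z : ℝ, Real.exp (-γ * f z))
          ≤ ∫ z : ℝ, Real.exp (-(γ - 1) * m) * Real.exp (-1 * f z) :=
            integral_mono (hint γ hγ0) ((hint 1 one_pos).const_mul _) h1
        _ = Real.exp (-(γ - 1) * m) * C := by rw [integral_const_mul]
    have hlog : Real.log (∫ z : ℝ, Real.exp (-γ * f z)) ≤ -(γ - 1) * m + Real.log C := by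
      calc Real.log (∫ z : ℝ, Real.exp (-γ * f z))
          ≤ Real.log (Real.exp (-(γ - 1) * m) * C) :=
            Real.log_le_log (hIpos γ hγ0) hbound
        _ = -(γ - 1) * m + Real.log C := by
            rw [Real.log_mul (Real.exp_pos _).ne' hCpos.ne', Real.log_exp]
    have : m - (m + Real.log C) / γ ≤
        -(1 / γ) * Real.log (∫ z : ℝ, Real.exp (-γ * f z)) := by
      have h4 : -(1 / γ) * (-(γ - 1) * m + Real.log C) ≤
          -(1 / γ) * Real.log (∫ z : ℝ, Real.exp (-γ * f z)) :=
        mul_le_mul_of_nonpos_left hlog (neg_nonpos.2 (by positivity))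
      have h5 : m - (m + Real.log C) / γ = -(1 / γ) * (-(γ - 1) * m + Real.log C) := by
        field_simp; ring
      linarith
    exact lt_of_lt_of_le hγa this
  · -- upper bound: m < a', eventually -(1/γ) log ∫ < a'
    intro a ha
    set ε : ℝ := (a - m) / 2 with hε
    have hεpos : 0 < ε := by simp only [hε]; linarith
    -- continuity: find δ > 0 with f z < m + ε on [p - δ, p + δ]
    obtain ⟨δ, hδpos, hδ⟩ : ∃ δ > 0, ∀ z ∈ Set.Icc (p - δ) (p + δ), f z < m + ε := by
      have : ∀ᶠ z in nhds p, f z < m + ε := by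
        apply (hfc.continuousAt (x := p)).eventually_lt continuousAt_const
        simp only [hm]; linarith
      obtain ⟨δ, hδpos, hδ⟩ := Metric.eventually_nhds_iff_ball.1 this
      refine ⟨δ / 2, by linarith, fun z hz => hδ z ?_⟩
      rw [Metric.mem_ball, Real.dist_eq]
      rw [Set.mem_Icc] at hz
      rw [abs_lt]; constructor <;> linarith
    filter_upwards [eventually_gt_atTop (0 : ℝ),
      (show Tendsto (fun γ : ℝ => m + ε - Real.log (2 * δ) / γ) atTop (nhds (m + ε)) by
        have : Tendsto (fun γ : ℝ => Real.log (2 * δ) / γ) atTop (nhds 0) :=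
          tendsto_const_nhds.div_atTop tendsto_id
        simpa using tendsto_const_nhds.sub this).eventually
        (eventually_lt_nhds (show m + ε < a by simp only [hε]; linarith))] with γ hγ0 hγa
    -- lower bound on the integral
    have hbound : 2 * δ * Real.exp (-γ * (m + ε)) ≤ ∫ z : ℝ, Real.exp (-γ * f z) := by
      have h1 : (∫ z in Set.Icc (p - δ) (p + δ), Real.exp (-γ * (m + ε)))
          ≤ ∫ z in Set.Icc (p - δ) (p + δ), Real.exp (-γ * f z) := by
        apply setIntegral_mono_on (integrableOn_const (μ := volume) (s := Set.Icc (p - δ) (p + δ)) (by simp) (by simp))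
          ((hint γ hγ0).integrableOn) measurableSet_Icc
        intro z hz
        exact Real.exp_le_exp.2 (mul_le_mul_of_nonpos_left (hδ z hz).le (by linarith))
      have h2 : (∫ z in Set.Icc (p - δ) (p + δ), Real.exp (-γ * (m + ε)))
          = 2 * δ * Real.exp (-γ * (m + ε)) := by
        rw [setIntegral_const]
        rw [Real.volume_real_Icc_of_le (by linarith)]
        rw [smul_eq_mul]; ring_nf
      have h3 : (∫ z in Set.Icc (p - δ) (p + δ), Real.exp (-γ * f z))
          ≤ ∫ z : ℝ, Real.exp (-γ * f z) :=
        setIntegral_le_integral (hint γ hγ0)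
          (Filter.Eventually.of_forall fun z => (Real.exp_pos _).le)
      linarith
    have hlog : Real.log (2 * δ) + -γ * (m + ε) ≤
        Real.log (∫ z : ℝ, Real.exp (-γ * f z)) := by
      calc Real.log (2 * δ) + -γ * (m + ε)
          = Real.log (2 * δ * Real.exp (-γ * (m + ε))) := by
            rw [Real.log_mul (by linarith) (Real.exp_pos _).ne', Real.log_exp]
        _ ≤ Real.log (∫ z : ℝ, Real.exp (-γ * f z)) :=
            Real.log_le_log (by positivity) hbound
    have : -(1 / γ) * Real.log (∫ z : ℝ, Real.exp (-γ * f z)) ≤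
        m + ε - Real.log (2 * δ) / γ := by
      have h4 : -(1 / γ) * Real.log (∫ z : ℝ, Real.exp (-γ * f z)) ≤
          -(1 / γ) * (Real.log (2 * δ) + -γ * (m + ε)) :=
        mul_le_mul_of_nonpos_left hlog (neg_nonpos.2 (by positivity))
      calc -(1 / γ) * Real.log (∫ z : ℝ, Real.exp (-γ * f z))
          ≤ -(1 / γ) * (Real.log (2 * δ) + -γ * (m + ε)) := h4
        _ = m + ε - Real.log (2 * δ) / γ := by field_simp; ring
    exact lt_of_le_of_lt this hγa
end
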